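/- Suppose δ̄₃† κ² < 1/4 and κ² ω < 1. Then the Wilks-type lower bound holds: 2 L(υ̃) − 2 L(υ*) + ‖F^{-1/2} ξ‖² ≥ − (ω / (1 − κ² ω)) ‖D F^{-1} ξ‖². -/

import Mathlib

open MeasureTheory RealInnerProductSpace

/-- Application of a matrix to a vector in Euclidean space. -/
noncomputable def mApp {p q : ℕ} (M : Matrix (Fin q) (Fin p) ℝ)
    (v : EuclideanSpace ℝ (Fin p)) : EuclideanSpace ℝ (Fin q) :=
  Matrix.toEuclideanLin M v

/-- Operator norm of (the Euclidean linear map induced by) a matrix. -/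
noncomputable def mopNorm {p q : ℕ} (M : Matrix (Fin q) (Fin p) ℝ) : ℝ :=
  ‖(LinearMap.toContinuousLinearMap (Matrix.toEuclideanLin M))‖

/-- The positive semidefinite square root of a positive semidefinite matrix
(the definition of `Matrix.PosSemidef.sqrt` in the older Mathlib). -/
noncomputable def psdSqrt {n : Type*} [Fintype n] [DecidableEq n] {A : Matrix n n ℝ}
    (hA : A.PosSemidef) : Matrix n n ℝ :=
  (hA.1.eigenvectorUnitary : Matrix n n ℝ) * Matrix.diagonal ((↑) ∘ (√·) ∘ hA.1.eigenvalues) *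
    (star hA.1.eigenvectorUnitary : Matrix n n ℝ)

section Helpers

open Matrix Metric

variable {p : ℕ}

local notation "E" => EuclideanSpace ℝ (Fin p)

lemma inner_mApp (M : Matrix (Fin p) (Fin p) ℝ) (u v : E) :
    ⟪mApp M u, v⟫ = dotProduct (M *ᵥ (WithLp.equiv 2 _ u)) (WithLp.equiv 2 _ v) := by
  simp [mApp, Matrix.toEuclideanLin_apply, PiLp.inner_apply, dotProduct, RCLike.inner_apply,
    mul_comm]

lemma mApp_add (M : Matrix (Fin p) (Fin p) ℝ) (u v : E) :
    mApp M (u + v) = mApp M u + mApp M v := by simp [mApp]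

lemma mApp_smul (M : Matrix (Fin p) (Fin p) ℝ) (c : ℝ) (u : E) :
    mApp M (c • u) = c • mApp M u := by simp [mApp]

lemma mApp_mul (M N : Matrix (Fin p) (Fin p) ℝ) (u : E) :
    mApp (M * N) u = mApp M (mApp N u) := by
  simp [mApp, Matrix.toEuclideanLin_apply, Matrix.mulVec_mulVec]

lemma inner_mApp_symm (M : Matrix (Fin p) (Fin p) ℝ) (hM : M.IsSymm)
    (u v : E) : ⟪mApp M u, v⟫ = ⟪u, mApp M v⟫ := by
  rw [inner_mApp, real_inner_comm, inner_mApp]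
  rw [dotProduct_comm, dotProduct_mulVec, ← Matrix.mulVec_transpose, hM,
    dotProduct_comm]

lemma mApp_posSemidef_nonneg {M : Matrix (Fin p) (Fin p) ℝ} (hM : M.PosSemidef)
    (u : E) : 0 ≤ ⟪mApp M u, u⟫ := by
  rw [inner_mApp]
  have := hM.dotProduct_mulVec_nonneg (WithLp.equiv 2 _ u)
  simpa [dotProduct_comm] using this

lemma norm_mApp_sq (M : Matrix (Fin p) (Fin p) ℝ) (hM : M.IsSymm)
    (u : E) : ‖mApp M u‖ ^ 2 = ⟪mApp (M * M) u, u⟫ := by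
  rw [mApp_mul, ← real_inner_self_eq_norm_sq, inner_mApp_symm M hM, real_inner_comm]

lemma mApp_inv_cancel {M : Matrix (Fin p) (Fin p) ℝ} (hM : IsUnit M)
    (u : E) : mApp M⁻¹ (mApp M u) = u := by
  rw [← mApp_mul, Matrix.nonsing_inv_mul _ (Matrix.isUnit_iff_isUnit_det M |>.mp hM), mApp]
  simp [Matrix.toEuclideanLin_apply]

lemma real_isSymm_of_isHermitian {M : Matrix (Fin p) (Fin p) ℝ} (h : M.IsHermitian) :
    M.IsSymm := by
  rw [Matrix.IsSymm]
  ext i j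
  conv_rhs => rw [← h.eq]
  simp [Matrix.conjTranspose_apply]

lemma mApp_matSub (M N : Matrix (Fin p) (Fin p) ℝ) (u : E) :
    mApp (M - N) u = mApp M u - mApp N u := by simp [mApp]

lemma mApp_matSmul (c : ℝ) (M : Matrix (Fin p) (Fin p) ℝ) (u : E) :
    mApp (c • M) u = c • mApp M u := by simp [mApp]

lemma norm_mApp_le (M : Matrix (Fin p) (Fin p) ℝ) (v : E) :
    ‖mApp M v‖ ≤ mopNorm M * ‖v‖ := by
  have h := (LinearMap.toContinuousLinearMap (Matrix.toEuclideanLin M)).le_opNorm v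
  rw [LinearMap.coe_toContinuousLinearMap'] at h
  exact h

lemma mopNorm_nonneg (M : Matrix (Fin p) (Fin p) ℝ) : 0 ≤ mopNorm M := norm_nonneg _

lemma inner_gradient' (f : E → ℝ) (x v : E) : ⟪gradient f x, v⟫ = fderiv ℝ f x v := by
  rw [gradient, ← InnerProductSpace.toDual_apply_apply, LinearIsometryEquiv.apply_symm_apply]

lemma convex_grad_le {f : E → ℝ} (hconv : ConvexOn ℝ Set.univ f)
    (hf : ContDiff ℝ 2 f) (x y : E) :
    f x + ⟪gradient f x, y - x⟫ ≤ f y := by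
  have hc : ∀ t : ℝ, HasDerivAt (fun t : ℝ => f (x + t • (y - x)))
      (fderiv ℝ f (x + t • (y - x)) (y - x)) t := by
    intro t
    have h1 : HasDerivAt (fun t : ℝ => x + t • (y - x)) (y - x) t := by
      simpa using ((hasDerivAt_id t).smul_const (y - x)).const_add x
    exact ((hf.differentiable (by norm_num) _).hasFDerivAt).comp_hasDerivAt t h1
  have hφconv : ConvexOn ℝ Set.univ (fun t : ℝ => f (x + t • (y - x))) := by
    have := hconv.comp_affineMap (AffineMap.lineMap x y : ℝ →ᵃ[ℝ] E)
    simp only [Set.preimage_univ] at this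
    have e : (fun t : ℝ => f (x + t • (y - x))) = f ∘ AffineMap.lineMap x y := by
      funext t
      simp [AffineMap.lineMap_apply, Function.comp]
      abel_nf
    rw [e]; exact this
  have hsl := hφconv.le_slope_of_hasDerivAt (Set.mem_univ 0) (Set.mem_univ 1) one_pos (hc 0)
  rw [slope_def_field] at hsl
  simp only [zero_smul, add_zero, one_smul, sub_zero, div_one] at hsl
  rw [inner_gradient']
  have : x + (y - x) = y := by abel
  rw [this] at hsl
  linarith

lemma grad_mono {f : E → ℝ} (hconv : ConvexOn ℝ Set.univ f)
    (hf : ContDiff ℝ 2 f) (x y : E) :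
    0 ≤ ⟪gradient f y - gradient f x, y - x⟫ := by
  have h1 := convex_grad_le hconv hf x y
  have h2 := convex_grad_le hconv hf y x
  have e1 : (x - y : E) = -(y - x) := by abel
  rw [e1, inner_neg_right] at h2
  rw [inner_sub_left]
  linarith

lemma taylor_bound (f : E → ℝ) (hf : ContDiff ℝ 2 f) (υs : E) (R : ℝ) :
    ∃ K : ℝ, 0 ≤ K ∧ ∀ u : E, ‖u‖ ≤ R →
      |f (υs + u) - f υs - fderiv ℝ f υs u| ≤ K * ‖u‖ ^ 2 ∧
      ‖gradient f (υs + u) - gradient f υs‖ ≤ K * ‖u‖ := by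
  have hg : ContDiff ℝ 1 (fderiv ℝ f) := hf.fderiv_right (by norm_num)
  obtain ⟨K0, hK0⟩ := (isCompact_closedBall υs R).exists_bound_of_continuousOn
    ((hg.continuous_fderiv (by norm_num)).continuousOn)
  set K := max K0 0 with hK
  have hlip : ∀ z ∈ closedBall υs R, ∀ w ∈ closedBall υs R,
      ‖fderiv ℝ f z - fderiv ℝ f w‖ ≤ K * ‖z - w‖ := by
    intro z hz w hw
    exact (convex_closedBall υs R).norm_image_sub_le_of_norm_fderiv_le
      (fun x _ => hg.differentiable (by norm_num) x)
      (fun x hx => (hK0 x hx).trans (le_max_left _ _)) hw hz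
  refine ⟨K, le_max_right _ _, fun u hu => ?_⟩
  have h1 : υs ∈ closedBall υs ‖u‖ := mem_closedBall_self (norm_nonneg u)
  have h2 : υs + u ∈ closedBall υs ‖u‖ := by
    simp [Metric.mem_closedBall, dist_eq_norm, add_sub_cancel_left]
  have hsub : closedBall υs ‖u‖ ⊆ closedBall υs R := closedBall_subset_closedBall hu
  constructor
  · have hb : ∀ z ∈ closedBall υs ‖u‖, ‖fderiv ℝ f z - fderiv ℝ f υs‖ ≤ K * ‖u‖ := by
      intro z hz
      refine (hlip z (hsub hz) υs (hsub h1)).trans ?_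
      have hz' : ‖z - υs‖ ≤ ‖u‖ := by
        rw [Metric.mem_closedBall, dist_eq_norm] at hz; exact hz
      exact mul_le_mul_of_nonneg_left hz' (le_max_right _ _)
    have hmvt := (convex_closedBall υs ‖u‖).norm_image_sub_le_of_norm_fderiv_le'
      (fun x _ => hf.differentiable (by norm_num) x) hb h1 h2
    simp only [add_sub_cancel_left, Real.norm_eq_abs] at hmvt
    calc |f (υs + u) - f υs - fderiv ℝ f υs u| ≤ K * ‖u‖ * ‖u‖ := hmvt
      _ = K * ‖u‖ ^ 2 := by ring
  · have hl := hlip (υs + u) (hsub h2) υs (hsub h1)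
    have : gradient f (υs + u) - gradient f υs =
        (InnerProductSpace.toDual ℝ _).symm (fderiv ℝ f (υs + u) - fderiv ℝ f υs) := by
      rw [map_sub]; rfl
    rw [this, LinearIsometryEquiv.norm_map]
    simpa [add_sub_cancel_left] using hl

lemma grad_min {f : E → ℝ} (hf : ContDiff ℝ 2 f) (ξ υt : E)
    (hmin : ∀ υ : E, f υt + ⟪ξ, υt⟫ ≤ f υ + ⟪ξ, υ⟫) : gradient f υt = -ξ := by
  have hL : HasFDerivAt (fun υ : E => f υ + ⟪ξ, υ⟫)
      (fderiv ℝ f υt + (innerSL ℝ ξ : E →L[ℝ] ℝ)) υt :=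
    ((hf.differentiable (by norm_num) υt).hasFDerivAt).add ((innerSL ℝ ξ).hasFDerivAt)
  have hismin : IsLocalMin (fun υ : E => f υ + ⟪ξ, υ⟫) υt := Filter.Eventually.of_forall hmin
  have h0 := hismin.hasFDerivAt_eq_zero hL
  have hfd : fderiv ℝ f υt = -(innerSL ℝ ξ : E →L[ℝ] ℝ) := by
    rw [eq_neg_iff_add_eq_zero]; exact h0
  have htd : (InnerProductSpace.toDual ℝ (EuclideanSpace ℝ (Fin p))) ξ
      = (innerSL ℝ ξ : E →L[ℝ] ℝ) := by
    ext y; simp [InnerProductSpace.toDual_apply_apply]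
  rw [gradient, hfd, ← htd, map_neg, LinearIsometryEquiv.symm_apply_apply]

lemma psdSqrt_mul_self {A : Matrix (Fin p) (Fin p) ℝ} (hA : A.PosSemidef) :
    psdSqrt hA * psdSqrt hA = A := by
  have hU : (star hA.1.eigenvectorUnitary : Matrix (Fin p) (Fin p) ℝ) *
      (hA.1.eigenvectorUnitary : Matrix (Fin p) (Fin p) ℝ) = 1 := by simp
  conv_rhs => rw [hA.1.spectral_theorem, Unitary.conjStarAlgAut_apply]
  simp only [psdSqrt]
  calc _ = (hA.1.eigenvectorUnitary : Matrix (Fin p) (Fin p) ℝ) *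
        Matrix.diagonal ((↑) ∘ (√·) ∘ hA.1.eigenvalues) *
        ((star hA.1.eigenvectorUnitary : Matrix (Fin p) (Fin p) ℝ) *
          (hA.1.eigenvectorUnitary : Matrix (Fin p) (Fin p) ℝ)) *
        Matrix.diagonal ((↑) ∘ (√·) ∘ hA.1.eigenvalues) *
        (star hA.1.eigenvectorUnitary : Matrix (Fin p) (Fin p) ℝ) := by
          simp only [Matrix.mul_assoc]
    _ = _ := by
      rw [hU, Matrix.mul_one, Matrix.mul_assoc _ (Matrix.diagonal _) (Matrix.diagonal _),
        Matrix.diagonal_mul_diagonal]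
      congr 3
      funext i
      simp [Real.mul_self_sqrt (hA.eigenvalues_nonneg i)]

lemma psdSqrt_isHermitian {A : Matrix (Fin p) (Fin p) ℝ} (hA : A.PosSemidef) :
    (psdSqrt hA).IsHermitian := by
  simp [psdSqrt, Matrix.IsHermitian, Matrix.conjTranspose_mul, Matrix.mul_assoc,
    Matrix.star_eq_conjTranspose, Matrix.conjTranspose_eq_transpose_of_trivial, Matrix.transpose_mul]

end Helpers

set_option maxHeartbeats 2000000 in
theorem wilks_lower_bound
    {p : ℕ} (hp : 1 ≤ p)
    (f : EuclideanSpace ℝ (Fin p) → ℝ)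
    (hconv : ConvexOn ℝ Set.univ f)
    (hf : ContDiff ℝ 2 f)
    (υs : EuclideanSpace ℝ (Fin p))
    (hgrad : gradient f υs = 0)
    (F : Matrix (Fin p) (Fin p) ℝ) (hF : F.PosDef)
    (hFdef : ∀ u w : EuclideanSpace ℝ (Fin p),
      iteratedFDeriv ℝ 2 f υs ![u, w] = ⟪mApp F u, w⟫)
    (ξ υt : EuclideanSpace ℝ (Fin p))
    (hmin : ∀ υ : EuclideanSpace ℝ (Fin p), f υt + ⟪ξ, υt⟫ ≤ f υ + ⟪ξ, υ⟫)
    (D : Matrix (Fin p) (Fin p) ℝ) (hD : D.PosDef)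
    (κ : ℝ) (hκ : 0 < κ)
    (hLoew : (κ ^ 2 • F - D * D).PosSemidef)
    (r : ℝ) (hrpos : 0 < r)
    (hξr : ‖mApp (psdSqrt hF.posSemidef)⁻¹ ξ‖ ≤ r)
    (ω δ3 : ℝ)
    (hω : ω = sSup {x : ℝ | ∃ u : EuclideanSpace ℝ (Fin p), u ≠ 0 ∧
      ‖mApp (psdSqrt hF.posSemidef) u‖ ≤ 4 / 3 * r ∧
      x = 2 * |f (υs + u) - f υs - ⟪gradient f υs, u⟫ - 1 / 2 * ⟪mApp F u, u⟫| /
        ‖mApp D u‖ ^ 2})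
    (hδ3 : δ3 = sSup {x : ℝ | ∃ u : EuclideanSpace ℝ (Fin p), u ≠ 0 ∧
      ‖mApp (psdSqrt hF.posSemidef) u‖ ≤ 4 / 3 * r ∧
      x = |⟪gradient f (υs + u) - gradient f υs, u⟫ - ⟪mApp F u, u⟫| /
        ‖mApp D u‖ ^ 2})
    (hmain : δ3 * κ ^ 2 < 1 / 4) (hω1 : κ ^ 2 * ω < 1) :
    2 * (f υt + ⟪ξ, υt⟫) - 2 * (f υs + ⟪ξ, υs⟫) + ‖mApp (psdSqrt hF.posSemidef)⁻¹ ξ‖ ^ 2 ≥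
      -(ω / (1 - κ ^ 2 * ω)) * ‖mApp D (mApp F⁻¹ ξ)‖ ^ 2 := by
  classical
  set S : Matrix (Fin p) (Fin p) ℝ := psdSqrt hF.posSemidef with hSdef
  -- basic matrix facts
  have hSS : S * S = F := psdSqrt_mul_self hF.posSemidef
  have hSsymm : S.IsSymm := real_isSymm_of_isHermitian (psdSqrt_isHermitian hF.posSemidef)
  have hFsymm : F.IsSymm := real_isSymm_of_isHermitian hF.1
  have hDsymm : D.IsSymm := real_isSymm_of_isHermitian hD.1
  have hFunit : IsUnit F := hF.isUnit
  have hDunit : IsUnit D := hD.isUnit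
  have hSunit : IsUnit S := by
    rw [Matrix.isUnit_iff_isUnit_det, isUnit_iff_ne_zero]
    intro h0
    have : F.det = 0 := by rw [← hSS, Matrix.det_mul, h0, mul_zero]
    exact (isUnit_iff_ne_zero.mp ((Matrix.isUnit_iff_isUnit_det F).mp hFunit)) this
  have hSinvsymm : S⁻¹.IsSymm := by
    rw [Matrix.IsSymm, Matrix.transpose_nonsing_inv, hSsymm]
  have hSF : S * F⁻¹ = S⁻¹ := by
    rw [← hSS, Matrix.mul_inv_rev, ← Matrix.mul_assoc,
      Matrix.mul_nonsing_inv _ ((Matrix.isUnit_iff_isUnit_det S).mp hSunit), Matrix.one_mul]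
  have hK2 : ∀ u : EuclideanSpace ℝ (Fin p), ⟪mApp F u, u⟫ = ‖mApp S u‖ ^ 2 := by
    intro u; rw [norm_mApp_sq S hSsymm, hSS]
  have hK1 : ∀ v : EuclideanSpace ℝ (Fin p), ‖mApp D v‖ ≤ κ * ‖mApp S v‖ := by
    intro v
    have h := mApp_posSemidef_nonneg hLoew v
    rw [mApp_matSub, mApp_matSmul, inner_sub_left, inner_smul_left] at h
    rw [← norm_mApp_sq D hDsymm] at h
    rw [hK2] at h
    simp only [RCLike.star_def, conj_trivial] at h
    have h2 : ‖mApp D v‖ ^ 2 ≤ (κ * ‖mApp S v‖) ^ 2 := by nlinarith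
    have h3 : 0 ≤ κ * ‖mApp S v‖ := mul_nonneg (le_of_lt hκ) (norm_nonneg _)
    exact (pow_le_pow_iff_left₀ (norm_nonneg _) h3 (by norm_num)).mp h2
  have hK3 : ∀ u : EuclideanSpace ℝ (Fin p), ⟪ξ, u⟫ = ⟪mApp S⁻¹ ξ, mApp S u⟫ := by
    intro u
    rw [inner_mApp_symm S⁻¹ hSinvsymm, mApp_inv_cancel hSunit]
  have hDFxi : mApp S (mApp F⁻¹ ξ) = mApp S⁻¹ ξ := by rw [← mApp_mul, hSF]
  -- bound for set membership values and BddAbove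
  obtain ⟨K, hKnn, hKb⟩ := taylor_bound f hf υs (mopNorm S⁻¹ * (4 / 3 * r))
  have hfd0 : ∀ u : EuclideanSpace ℝ (Fin p), fderiv ℝ f υs u = 0 := by
    intro u
    rw [← inner_gradient', hgrad, inner_zero_left]
  have hnormu : ∀ u : EuclideanSpace ℝ (Fin p), ‖mApp S u‖ ≤ 4 / 3 * r →
      ‖u‖ ≤ mopNorm S⁻¹ * (4 / 3 * r) := by
    intro u hu
    calc ‖u‖ = ‖mApp S⁻¹ (mApp S u)‖ := by rw [mApp_inv_cancel hSunit]
      _ ≤ mopNorm S⁻¹ * ‖mApp S u‖ := norm_mApp_le _ _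
      _ ≤ mopNorm S⁻¹ * (4 / 3 * r) := by
          exact mul_le_mul_of_nonneg_left hu (mopNorm_nonneg _)
  have hDlow : ∀ u : EuclideanSpace ℝ (Fin p), ‖u‖ ≤ mopNorm D⁻¹ * ‖mApp D u‖ := by
    intro u
    calc ‖u‖ = ‖mApp D⁻¹ (mApp D u)‖ := by rw [mApp_inv_cancel hDunit]
      _ ≤ mopNorm D⁻¹ * ‖mApp D u‖ := norm_mApp_le _ _
  have hDpos : ∀ u : EuclideanSpace ℝ (Fin p), u ≠ 0 → 0 < ‖mApp D u‖ := by
    intro u hu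
    rcases eq_or_lt_of_le (norm_nonneg (mApp D u)) with h | h
    · exfalso
      apply hu
      have : mApp D u = 0 := by rw [← norm_eq_zero]; exact h.symm
      have h2 := mApp_inv_cancel hDunit u
      rw [this] at h2
      rw [← h2, mApp]
      simp
    · exact h
  set B : ℝ := (2 * K + mopNorm F) * mopNorm D⁻¹ ^ 2 with hB
  -- bound on elements of both sets
  have hub : ∀ u : EuclideanSpace ℝ (Fin p), u ≠ 0 → ‖mApp S u‖ ≤ 4 / 3 * r →
      2 * |f (υs + u) - f υs - ⟪gradient f υs, u⟫ - 1 / 2 * ⟪mApp F u, u⟫| ≤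
        (2 * K + mopNorm F) * ‖u‖ ^ 2 ∧
      |⟪gradient f (υs + u) - gradient f υs, u⟫ - ⟪mApp F u, u⟫| ≤
        (2 * K + mopNorm F) * ‖u‖ ^ 2 := by
    intro u hu hru
    obtain ⟨hT1, hT2⟩ := hKb u (hnormu u hru)
    have hFu : |⟪mApp F u, u⟫| ≤ mopNorm F * ‖u‖ ^ 2 := by
      calc |⟪mApp F u, u⟫| ≤ ‖mApp F u‖ * ‖u‖ := abs_real_inner_le_norm _ _
        _ ≤ mopNorm F * ‖u‖ * ‖u‖ :=
            mul_le_mul_of_nonneg_right (norm_mApp_le _ _) (norm_nonneg _)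
        _ = mopNorm F * ‖u‖ ^ 2 := by ring
    constructor
    · rw [hgrad]
      simp only [inner_zero_left]
      rw [hfd0 u] at hT1
      have : |f (υs + u) - f υs - 0 - 1 / 2 * ⟪mApp F u, u⟫| ≤
          |f (υs + u) - f υs - 0| + 1 / 2 * |⟪mApp F u, u⟫| := by
        rw [sub_zero]
        calc |f (υs + u) - f υs - 1 / 2 * ⟪mApp F u, u⟫|
            ≤ |f (υs + u) - f υs| + |1 / 2 * ⟪mApp F u, u⟫| := abs_sub _ _
          _ = |f (υs + u) - f υs| + 1 / 2 * |⟪mApp F u, u⟫| := by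
              rw [abs_mul]; norm_num
      rw [sub_zero] at this ⊢
      have h1 : |f (υs + u) - f υs| ≤ K * ‖u‖ ^ 2 := by
        rw [sub_zero] at hT1; exact hT1
      nlinarith [abs_nonneg (⟪mApp F u, u⟫ : ℝ)]
    · have hip : |⟪gradient f (υs + u) - gradient f υs, u⟫| ≤ K * ‖u‖ ^ 2 := by
        calc |⟪gradient f (υs + u) - gradient f υs, u⟫|
            ≤ ‖gradient f (υs + u) - gradient f υs‖ * ‖u‖ := abs_real_inner_le_norm _ _
          _ ≤ K * ‖u‖ * ‖u‖ := mul_le_mul_of_nonneg_right hT2 (norm_nonneg _)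
          _ = K * ‖u‖ ^ 2 := by ring
      calc |⟪gradient f (υs + u) - gradient f υs, u⟫ - ⟪mApp F u, u⟫|
          ≤ |⟪gradient f (υs + u) - gradient f υs, u⟫| + |⟪mApp F u, u⟫| := abs_sub _ _
        _ ≤ K * ‖u‖ ^ 2 + mopNorm F * ‖u‖ ^ 2 := add_le_add hip hFu
        _ ≤ (2 * K + mopNorm F) * ‖u‖ ^ 2 := by nlinarith [sq_nonneg ‖u‖]
  have hratio : ∀ x d : ℝ, 0 < d → x ≤ (2 * K + mopNorm F) * (mopNorm D⁻¹ * d) ^ 2 →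
      x / d ^ 2 ≤ B := by
    intro x d hd hx
    rw [div_le_iff₀ (by positivity)]
    calc x ≤ (2 * K + mopNorm F) * (mopNorm D⁻¹ * d) ^ 2 := hx
      _ = B * d ^ 2 := by rw [hB]; ring
  have hbddω : BddAbove {x : ℝ | ∃ u : EuclideanSpace ℝ (Fin p), u ≠ 0 ∧
      ‖mApp S u‖ ≤ 4 / 3 * r ∧
      x = 2 * |f (υs + u) - f υs - ⟪gradient f υs, u⟫ - 1 / 2 * ⟪mApp F u, u⟫| /
        ‖mApp D u‖ ^ 2} := by
    refine ⟨B, fun x hx => ?_⟩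
    obtain ⟨u, hu, hru, hxe⟩ := hx
    rw [hxe]
    refine hratio _ _ (hDpos u hu) ?_
    refine ((hub u hu hru).1).trans ?_
    have h1 : ‖u‖ ≤ mopNorm D⁻¹ * ‖mApp D u‖ := hDlow u
    have h2 : (0:ℝ) ≤ 2 * K + mopNorm F := by
      have := mopNorm_nonneg F; linarith
    exact mul_le_mul_of_nonneg_left (pow_le_pow_left₀ (norm_nonneg u) h1 2) h2
  have hbddδ : BddAbove {x : ℝ | ∃ u : EuclideanSpace ℝ (Fin p), u ≠ 0 ∧
      ‖mApp S u‖ ≤ 4 / 3 * r ∧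
      x = |⟪gradient f (υs + u) - gradient f υs, u⟫ - ⟪mApp F u, u⟫| /
        ‖mApp D u‖ ^ 2} := by
    refine ⟨B, fun x hx => ?_⟩
    obtain ⟨u, hu, hru, hxe⟩ := hx
    rw [hxe]
    refine hratio _ _ (hDpos u hu) ?_
    refine ((hub u hu hru).2).trans ?_
    have h1 : ‖u‖ ≤ mopNorm D⁻¹ * ‖mApp D u‖ := hDlow u
    have h2 : (0:ℝ) ≤ 2 * K + mopNorm F := by
      have := mopNorm_nonneg F; linarith
    exact mul_le_mul_of_nonneg_left (pow_le_pow_left₀ (norm_nonneg u) h1 2) h2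
  -- a sample element: both sets are nonempty
  have hexu : ∃ u : EuclideanSpace ℝ (Fin p), u ≠ 0 ∧ ‖mApp S u‖ ≤ 4 / 3 * r := by
    set e : EuclideanSpace ℝ (Fin p) := EuclideanSpace.single ⟨0, hp⟩ (1:ℝ) with he
    have hne : e ≠ 0 := by
      have h1 : ‖e‖ = 1 := by rw [he, EuclideanSpace.norm_single, norm_one]
      intro h
      rw [h, norm_zero] at h1
      norm_num at h1
    set c : ℝ := (4 / 3 * r) / (mopNorm S * ‖e‖ + 1) with hc
    have hden : 0 < mopNorm S * ‖e‖ + 1 := by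
      have := mopNorm_nonneg S
      have := norm_nonneg e
      nlinarith
    have hcpos : 0 < c := by
      apply div_pos (by linarith) hden
    refine ⟨c • e, smul_ne_zero (ne_of_gt hcpos) hne, ?_⟩
    rw [mApp_smul, norm_smul, Real.norm_eq_abs, abs_of_pos hcpos]
    have h1 : ‖mApp S e‖ ≤ mopNorm S * ‖e‖ := norm_mApp_le _ _
    calc c * ‖mApp S e‖ ≤ c * (mopNorm S * ‖e‖ + 1) := by
          apply mul_le_mul_of_nonneg_left _ (le_of_lt hcpos)
          linarith
      _ = 4 / 3 * r := by rw [hc, div_mul_cancel₀]; exact ne_of_gt hden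
  -- nonnegativity of ω, δ3
  have hω0 : 0 ≤ ω := by
    obtain ⟨u, hu, hru⟩ := hexu
    rw [hω]
    refine le_trans ?_ (le_csSup hbddω ⟨u, hu, hru, rfl⟩)
    positivity
  have hδ30 : 0 ≤ δ3 := by
    obtain ⟨u, hu, hru⟩ := hexu
    rw [hδ3]
    refine le_trans ?_ (le_csSup hbddδ ⟨u, hu, hru, rfl⟩)
    positivity
  have h1κω : 0 < 1 - κ ^ 2 * ω := by linarith
  -- localization
  set u : EuclideanSpace ℝ (Fin p) := υt - υs with hu
  have hυt : υs + u = υt := by rw [hu]; abel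
  have hgt : gradient f υt = -ξ := grad_min hf ξ υt hmin
  have hloc : ‖mApp S u‖ ≤ 4 / 3 * r := by
    by_contra hcon
    push_neg at hcon
    have ht0 : 0 < ‖mApp S u‖ := lt_trans (by positivity) hcon
    have hune : u ≠ 0 := by
      intro h
      rw [h, mApp] at ht0
      simp at ht0
    set s₀ : ℝ := (4 / 3 * r) / ‖mApp S u‖ with hs₀
    have hs₀pos : 0 < s₀ := div_pos (by linarith) ht0
    have hs₀lt : s₀ < 1 := (div_lt_one ht0).mpr hcon
    set v : EuclideanSpace ℝ (Fin p) := s₀ • u with hv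
    have hvne : v ≠ 0 := smul_ne_zero (ne_of_gt hs₀pos) hune
    have hSv : ‖mApp S v‖ = 4 / 3 * r := by
      rw [hv, mApp_smul, norm_smul, Real.norm_eq_abs, abs_of_pos hs₀pos, hs₀,
        div_mul_cancel₀ _ (ne_of_gt ht0)]
    have hmem : |⟪gradient f (υs + v) - gradient f υs, v⟫ - ⟪mApp F v, v⟫| /
        ‖mApp D v‖ ^ 2 ≤ δ3 := by
      rw [hδ3]
      exact le_csSup hbddδ ⟨v, hvne, le_of_eq hSv, rfl⟩
    have hDv : 0 < ‖mApp D v‖ := hDpos v hvne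
    have hnum : |⟪gradient f (υs + v) - gradient f υs, v⟫ - ⟪mApp F v, v⟫| ≤
        δ3 * ‖mApp D v‖ ^ 2 := by
      rw [div_le_iff₀ (by positivity)] at hmem
      linarith [hmem]
    have hDvS : ‖mApp D v‖ ^ 2 ≤ κ ^ 2 * (4 / 3 * r) ^ 2 := by
      have := hK1 v
      rw [hSv] at this
      nlinarith [norm_nonneg (mApp D v), mul_nonneg (le_of_lt hκ) (by linarith : (0:ℝ) ≤ 4/3 * r)]
    have hFv : ⟪mApp F v, v⟫ = (4 / 3 * r) ^ 2 := by rw [hK2, hSv]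
    -- lower bound for ⟪∇f(υs+v), v⟫
    have hlow : 4 / 3 * r ^ 2 < ⟪gradient f (υs + v), v⟫ := by
      have h1 : ⟪gradient f (υs + v) - gradient f υs, v⟫ ≥
          ⟪mApp F v, v⟫ - δ3 * ‖mApp D v‖ ^ 2 := by
        have := abs_le.mp hnum
        linarith [this.1]
      rw [hgrad, sub_zero] at h1
      have h2 : δ3 * ‖mApp D v‖ ^ 2 ≤ δ3 * κ ^ 2 * (4 / 3 * r) ^ 2 := by
        nlinarith [hδ30]
      have h3 : (0:ℝ) < (4 / 3 * r) ^ 2 := by positivity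
      nlinarith
    -- upper bound via monotonicity
    have hupp : ⟪gradient f (υs + v), v⟫ ≤ 4 / 3 * r ^ 2 := by
      have hmono := grad_mono hconv hf (υs + v) (υs + u)
      have hdiff : (υs + u) - (υs + v) = (1 - s₀) • u := by
        rw [hv]
        rw [sub_smul, one_smul]
        abel
      rw [hdiff] at hmono
      rw [inner_smul_right] at hmono
      have h1s : 0 < 1 - s₀ := by linarith
      have hmono2 : 0 ≤ ⟪gradient f (υs + u) - gradient f (υs + v), u⟫ :=
        nonneg_of_mul_nonneg_right hmono h1s
      rw [inner_sub_left] at hmono2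
      have hιn : ⟪gradient f (υs + u), u⟫ = -⟪ξ, u⟫ := by
        rw [hυt, hgt, inner_neg_left]
      have hstep : ⟪gradient f (υs + v), u⟫ ≤ -⟪ξ, u⟫ := by
        rw [← hιn]; linarith
      have hvin : ⟪gradient f (υs + v), v⟫ = s₀ * ⟪gradient f (υs + v), u⟫ := by
        rw [hv, inner_smul_right]
      rw [hvin]
      have hξu : -⟪ξ, u⟫ ≤ r * ‖mApp S u‖ := by
        rw [hK3]
        calc -⟪mApp S⁻¹ ξ, mApp S u⟫ ≤ ‖mApp S⁻¹ ξ‖ * ‖mApp S u‖ := by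
              have := abs_real_inner_le_norm (mApp S⁻¹ ξ) (mApp S u)
              have := neg_abs_le (⟪mApp S⁻¹ ξ, mApp S u⟫ : ℝ)
              linarith
          _ ≤ r * ‖mApp S u‖ := mul_le_mul_of_nonneg_right hξr (norm_nonneg _)
      calc s₀ * ⟪gradient f (υs + v), u⟫ ≤ s₀ * (r * ‖mApp S u‖) := by
            apply mul_le_mul_of_nonneg_left _ (le_of_lt hs₀pos)
            linarith
        _ = 4 / 3 * r * r := by
            rw [hs₀]; field_simp [ne_of_gt ht0]
        _ = 4 / 3 * r ^ 2 := by ring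
    linarith
  -- main bound
  rcases eq_or_ne u 0 with hu0 | hune
  · have hts : υt = υs := by
      have : υt - υs = 0 := hu0
      rwa [sub_eq_zero] at this
    rw [hts]
    have hRHS : -(ω / (1 - κ ^ 2 * ω)) * ‖mApp D (mApp F⁻¹ ξ)‖ ^ 2 ≤ 0 := by
      have h1 : 0 ≤ ω / (1 - κ ^ 2 * ω) := div_nonneg hω0 (le_of_lt h1κω)
      nlinarith [sq_nonneg ‖mApp D (mApp F⁻¹ ξ)‖]
    have : 2 * (f υs + ⟪ξ, υs⟫) - 2 * (f υs + ⟪ξ, υs⟫) + ‖mApp S⁻¹ ξ‖ ^ 2 =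
        ‖mApp S⁻¹ ξ‖ ^ 2 := by ring
    rw [this]
    refine le_trans hRHS ?_
    positivity
  · -- ω bound at u
    have hmemω : 2 * |f (υs + u) - f υs - ⟪gradient f υs, u⟫ - 1 / 2 * ⟪mApp F u, u⟫| /
        ‖mApp D u‖ ^ 2 ≤ ω := by
      rw [hω]
      exact le_csSup hbddω ⟨u, hune, hloc, rfl⟩
    have hDu : 0 < ‖mApp D u‖ := hDpos u hune
    have hωu : 2 * |f (υs + u) - f υs - ⟪gradient f υs, u⟫ - 1 / 2 * ⟪mApp F u, u⟫| ≤
        ω * ‖mApp D u‖ ^ 2 := by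
      rw [div_le_iff₀ (by positivity)] at hmemω
      linarith
    rw [hgrad, inner_zero_left, sub_zero, hυt] at hωu
    have habs : f υt - f υs - 1 / 2 * ⟪mApp F u, u⟫ ≥ -(ω * ‖mApp D u‖ ^ 2) / 2 := by
      have h1 : |f υt - f υs - 1 / 2 * ⟪mApp F u, u⟫| ≤ ω * ‖mApp D u‖ ^ 2 / 2 := by
        linarith
      have := (abs_le.mp h1).1
      linarith
    set t : ℝ := ‖mApp S u + mApp S⁻¹ ξ‖ with hts
    set sD : ℝ := ‖mApp D (mApp F⁻¹ ξ)‖ with hsD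
    have hexp : ⟪mApp F u, u⟫ + 2 * ⟪ξ, u⟫ + ‖mApp S⁻¹ ξ‖ ^ 2 = t ^ 2 := by
      have hna := norm_add_sq_real (mApp S u) (mApp S⁻¹ ξ)
      have h1 : ⟪ξ, u⟫ = ⟪mApp S u, mApp S⁻¹ ξ⟫ := by
        rw [hK3 u, real_inner_comm]
      rw [← hts] at hna
      rw [hK2 u, h1]
      linarith
    have hDub : ‖mApp D u‖ ≤ κ * t + sD := by
      have h1 : mApp D u = mApp D (u + mApp F⁻¹ ξ) - mApp D (mApp F⁻¹ ξ) := by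
        rw [mApp_add]; abel
      calc ‖mApp D u‖ ≤ ‖mApp D (u + mApp F⁻¹ ξ)‖ + ‖mApp D (mApp F⁻¹ ξ)‖ := by
            rw [h1]; exact norm_sub_le _ _
        _ ≤ κ * ‖mApp S (u + mApp F⁻¹ ξ)‖ + sD := (add_le_add_iff_right _).mpr (hK1 _)
        _ = κ * t + sD := by rw [mApp_add, hDFxi]
    have hinner2 : ⟪ξ, υt⟫ - ⟪ξ, υs⟫ = ⟪ξ, u⟫ := by
      rw [hu, inner_sub_right]
    have hDub2 : ω * ‖mApp D u‖ ^ 2 ≤ ω * (κ * t + sD) ^ 2 := by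
      have h2 : ‖mApp D u‖ ^ 2 ≤ (κ * t + sD) ^ 2 := pow_le_pow_left₀ (norm_nonneg _) hDub 2
      exact mul_le_mul_of_nonneg_left h2 hω0
    have hiden : t ^ 2 - ω * (κ * t + sD) ^ 2 + ω / (1 - κ ^ 2 * ω) * sD ^ 2 =
        ((1 - κ ^ 2 * ω) * t - ω * κ * sD) ^ 2 / (1 - κ ^ 2 * ω) := by
      have hne : (1 - κ ^ 2 * ω) ≠ 0 := ne_of_gt h1κω
      rw [eq_div_iff hne, add_mul, mul_right_comm (ω / _), div_mul_cancel₀ _ hne]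
      ring
    have hkey : -(ω / (1 - κ ^ 2 * ω)) * sD ^ 2 ≤ t ^ 2 - ω * (κ * t + sD) ^ 2 := by
      have h1 : 0 ≤ ((1 - κ ^ 2 * ω) * t - ω * κ * sD) ^ 2 / (1 - κ ^ 2 * ω) :=
        div_nonneg (sq_nonneg _) (le_of_lt h1κω)
      rw [← hiden] at h1
      linarith
    have hLHS : 2 * (f υt + ⟪ξ, υt⟫) - 2 * (f υs + ⟪ξ, υs⟫) + ‖mApp S⁻¹ ξ‖ ^ 2 ≥
        t ^ 2 - ω * ‖mApp D u‖ ^ 2 := by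
      have : 2 * (f υt + ⟪ξ, υt⟫) - 2 * (f υs + ⟪ξ, υs⟫) + ‖mApp S⁻¹ ξ‖ ^ 2 =
          2 * (f υt - f υs - 1 / 2 * ⟪mApp F u, u⟫) +
          (⟪mApp F u, u⟫ + 2 * ⟪ξ, u⟫ + ‖mApp S⁻¹ ξ‖ ^ 2) - 2 * ⟪ξ, u⟫ +
          2 * (⟪ξ, υt⟫ - ⟪ξ, υs⟫) := by ring
      rw [this, hinner2, hexp]
      linarith
    linarith
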